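/- Efron's monotonicity theorem (m = 2): let X and Y be independent real random variables with log-concave densities, and let Φ : ℝ² → ℝ be bounded, measurable, and nondecreasing in each coordinate. Then g(z) = E[Φ(X,Y) | X+Y = z] is nondecreasing in z (where g(z) = ∫ Φ(x, z−x) f_X(x) f_Y(z−x) dx / ∫ f_X(x) f_Y(z−x) dx on the set where the denominator is positive). -/

import Mathlib

open MeasureTheory Set Filter Topology
open scoped ENNReal NNReal

namespace Efron

/-- Core log-concavity product inequality. -/
lemma lc_prod {f : ℝ → ℝ} (hnn : ∀ x, 0 ≤ f x)
    (hlc : ∀ x y t : ℝ, t ∈ Set.Icc (0:ℝ) 1 →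
        f (t * x + (1 - t) * y) ≥ f x ^ t * f y ^ (1 - t))
    (a : ℝ) {δ ε : ℝ} (hδ : 0 ≤ δ) (hε : 0 ≤ ε) :
    f a * f (a + δ + ε) ≤ f (a + ε) * f (a + δ) := by
  by_cases hz : f a * f (a + δ + ε) = 0
  · rw [hz]; exact mul_nonneg (hnn _) (hnn _)
  have ha0 : 0 < f a := lt_of_le_of_ne (hnn a) (by intro h; exact hz (by rw [← h]; ring))
  have hd0 : 0 < f (a + δ + ε) := by
    rcases (hnn (a + δ + ε)).lt_or_eq with h | h
    · exact h
    · exact absurd (by rw [← h]; ring) hz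
  rcases eq_or_lt_of_le (add_nonneg hδ hε) with h0 | hs
  · have hδ0 : δ = 0 := by linarith
    have hε0 : ε = 0 := by linarith
    subst hδ0; subst hε0
    simp only [add_zero]
    nlinarith [hnn a]
  set s := δ + ε with hs_def
  set t := δ / s with ht_def
  have ht0 : 0 ≤ t := div_nonneg hδ hs.le
  have ht1 : t ≤ 1 := by rw [ht_def, div_le_one hs]; linarith
  have h1t : 1 - t = ε / s := by
    rw [eq_div_iff hs.ne', sub_mul, ht_def, div_mul_cancel₀ _ hs.ne']; linarith [hs_def]
  have h1 := hlc a (a + s) t ⟨ht0, ht1⟩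
  have h2 := hlc a (a + s) (1 - t) ⟨by linarith, by linarith⟩
  have hts : t * s = δ := by rw [ht_def]; field_simp
  have h1ts : (1 - t) * s = ε := by rw [h1t]; field_simp
  have e1 : t * a + (1 - t) * (a + s) = a + ε := by
    have : t * a + (1 - t) * (a + s) = a + (1 - t) * s := by ring
    rw [this, h1ts]
  have e2 : (1 - t) * a + (1 - (1 - t)) * (a + s) = a + δ := by
    have h' : 1 - (1 - t) = t := by ring
    rw [h']
    have : (1 - t) * a + t * (a + s) = a + t * s := by ring
    rw [this, hts]
  rw [e1] at h1
  rw [e2] at h2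
  have hads : a + s = a + δ + ε := by rw [hs_def]; ring
  rw [hads] at h1 h2
  have key : (f a ^ t * f (a + δ + ε) ^ (1 - t)) * (f a ^ (1 - t) * f (a + δ + ε) ^ (1 - (1 - t)))
      = f a * f (a + δ + ε) := by
    have : 1 - (1 - t) = t := by ring
    rw [this]
    rw [show f a ^ t * f (a + δ + ε) ^ (1 - t) * (f a ^ (1 - t) * f (a + δ + ε) ^ t)
        = (f a ^ t * f a ^ (1 - t)) * (f (a + δ + ε) ^ (1 - t) * f (a + δ + ε) ^ t) by ring]
    rw [← Real.rpow_add ha0, ← Real.rpow_add hd0]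
    norm_num
  calc f a * f (a + δ + ε)
      = (f a ^ t * f (a + δ + ε) ^ (1 - t)) * (f a ^ (1 - t) * f (a + δ + ε) ^ (1 - (1 - t))) :=
        key.symm
    _ ≤ f (a + ε) * f (a + δ) :=
        mul_le_mul h1 h2 (mul_nonneg (Real.rpow_nonneg (hnn _) _) (Real.rpow_nonneg (hnn _) _))
          (hnn _)

/-- Key two-density rearrangement inequality. -/
lemma key_ineq {A B : ℝ → ℝ} (hA_nn : ∀ x, 0 ≤ A x) (hB_nn : ∀ x, 0 ≤ B x)
    (hA : Integrable A) (hB : Integrable B)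
    (hTP : ∀ ⦃y x : ℝ⦄, y ≤ x → A x * B y ≤ B x * A y) (c : ℝ) :
    (∫ x in Iic c, B x) * (∫ x in Ioi c, A x) ≤ (∫ x in Iic c, A x) * (∫ x in Ioi c, B x) := by
  have h1 : ∀ y ∈ Iic c, B y * (∫ x in Ioi c, A x) ≤ A y * (∫ x in Ioi c, B x) := by
    intro y hy
    rw [← integral_const_mul, ← integral_const_mul]
    apply setIntegral_mono_on (hA.restrict.const_mul _) (hB.restrict.const_mul _)
      measurableSet_Ioi
    intro x hx
    have h := hTP (le_trans hy (le_of_lt hx))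
    nlinarith
  calc (∫ x in Iic c, B x) * (∫ x in Ioi c, A x)
      = ∫ y in Iic c, B y * (∫ x in Ioi c, A x) := (integral_mul_const _ _).symm
    _ ≤ ∫ y in Iic c, A y * (∫ x in Ioi c, B x) :=
        setIntegral_mono_on (hB.restrict.mul_const _) (hA.restrict.mul_const _)
          measurableSet_Iic h1
    _ = (∫ x in Iic c, A x) * (∫ x in Ioi c, B x) := integral_mul_const _ _

section CDF

variable {p : ℝ → ℝ}

/-- Unnormalized CDF. -/
noncomputable def FF (p : ℝ → ℝ) (c : ℝ) : ℝ := ∫ x in Iic c, p x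

/-- Quantile function (with junk value 0 outside `(0,1)`). -/
noncomputable def QQ (p : ℝ → ℝ) (u : ℝ) : ℝ :=
  if 0 < u ∧ u < 1 then sInf {c | u * (∫ x, p x) ≤ FF p c} else 0

lemma FF_mono (hnn : ∀ x, 0 ≤ p x) (hint : Integrable p) : Monotone (FF p) := by
  intro a b hab
  exact setIntegral_mono_set hint.restrict (Eventually.of_forall hnn)
    (HasSubset.Subset.eventuallyLE (Iic_subset_Iic.2 hab))

lemma FF_nonneg (hnn : ∀ x, 0 ≤ p x) (c : ℝ) : 0 ≤ FF p c :=
  setIntegral_nonneg measurableSet_Iic fun x _ => hnn x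

lemma FF_add_compl (hint : Integrable p) (c : ℝ) :
    FF p c + (∫ x in Ioi c, p x) = ∫ x, p x := by
  have := integral_add_compl (measurableSet_Iic (a := c)) hint
  rwa [compl_Iic] at this

lemma FF_le (hnn : ∀ x, 0 ≤ p x) (hint : Integrable p) (c : ℝ) : FF p c ≤ ∫ x, p x := by
  rw [← FF_add_compl hint c]
  have : 0 ≤ ∫ x in Ioi c, p x := setIntegral_nonneg measurableSet_Ioi fun x _ => hnn x
  linarith

lemma FF_cont (hint : Integrable p) : Continuous (FF p) := by
  have : ∀ b, FF p b = FF p 0 + ∫ x in (0:ℝ)..b, p x := by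
    intro b
    have := intervalIntegral.integral_Iic_sub_Iic hint.integrableOn hint.integrableOn
      (a := 0) (b := b)
    unfold FF
    linarith
  rw [show FF p = fun b => FF p 0 + ∫ x in (0:ℝ)..b, p x from funext this]
  exact continuous_const.add (intervalIntegral.continuous_primitive
    (fun a b => hint.intervalIntegrable) 0)

lemma FF_tendsto_atTop (hnn : ∀ x, 0 ≤ p x) (hint : Integrable p) :
    Tendsto (FF p) atTop (𝓝 (∫ x, p x)) := by
  have hmono : Monotone (FF p) := FF_mono hnn hint
  have hbdd : BddAbove (range (FF p)) :=
    ⟨∫ x, p x, by rintro _ ⟨c, rfl⟩; exact FF_le hnn hint c⟩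
  have h1 : Tendsto (FF p) atTop (𝓝 (⨆ c, FF p c)) := tendsto_atTop_ciSup hmono hbdd
  have h2 : Tendsto (fun n : ℕ => FF p (n : ℝ)) atTop (𝓝 (∫ x, p x)) := by
    have hu : (⋃ n : ℕ, Iic (n : ℝ)) = univ := by
      ext x; simp only [mem_iUnion, mem_Iic, mem_univ, iff_true]
      exact exists_nat_ge x
    have := tendsto_setIntegral_of_monotone (f := p) (μ := volume)
      (s := fun n : ℕ => Iic (n : ℝ)) (fun n => measurableSet_Iic)
      (fun a b hab => Iic_subset_Iic.2 (by exact_mod_cast hab))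
      (by rw [hu]; exact hint.integrableOn)
    rwa [hu, setIntegral_univ] at this
  have h3 : Tendsto (fun n : ℕ => FF p (n : ℝ)) atTop (𝓝 (⨆ c, FF p c)) :=
    h1.comp tendsto_natCast_atTop_atTop
  rwa [tendsto_nhds_unique h3 h2] at h1

lemma FF_tendsto_atBot (hnn : ∀ x, 0 ≤ p x) (hint : Integrable p) :
    Tendsto (FF p) atBot (𝓝 0) := by
  have hmono : Monotone (FF p) := FF_mono hnn hint
  have hbdd : BddBelow (range (FF p)) :=
    ⟨0, by rintro _ ⟨c, rfl⟩; exact FF_nonneg hnn c⟩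
  have h1 : Tendsto (FF p) atBot (𝓝 (⨅ c, FF p c)) := tendsto_atBot_ciInf hmono hbdd
  have h2 : Tendsto (fun n : ℕ => FF p (-(n : ℝ))) atTop (𝓝 0) := by
    have hu : (⋃ n : ℕ, Ioi (-(n : ℝ))) = univ := by
      ext x; simp only [mem_iUnion, mem_Ioi, mem_univ, iff_true]
      obtain ⟨n, hn⟩ := exists_nat_gt (-x)
      exact ⟨n, by linarith⟩
    have ht := tendsto_setIntegral_of_monotone (f := p) (μ := volume)
      (s := fun n : ℕ => Ioi (-(n : ℝ))) (fun n => measurableSet_Ioi)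
      (fun a b hab => Ioi_subset_Ioi (by simp; exact_mod_cast hab))
      (by rw [hu]; exact hint.integrableOn)
    rw [hu, setIntegral_univ] at ht
    have : ∀ n : ℕ, FF p (-(n : ℝ)) = (∫ x, p x) - ∫ x in Ioi (-(n : ℝ)), p x := by
      intro n; have := FF_add_compl hint (-(n : ℝ)); linarith
    simp_rw [this]
    have := (tendsto_const_nhds (x := ∫ x, p x) (f := atTop (α := ℕ))).sub ht
    simpa using this
  have h3 : Tendsto (fun n : ℕ => FF p (-(n : ℝ))) atTop (𝓝 (⨅ c, FF p c)) := by
    apply h1.comp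
    exact tendsto_neg_atBot_iff.mpr tendsto_natCast_atTop_atTop
  rwa [tendsto_nhds_unique h3 h2] at h1

variable (hnn : ∀ x, 0 ≤ p x) (hint : Integrable p) (hD : 0 < ∫ x, p x)

lemma QQ_eq (u : ℝ) (hu : u ∈ Ioo (0:ℝ) 1) :
    QQ p u = sInf {c | u * (∫ x, p x) ≤ FF p c} := if_pos ⟨hu.1, hu.2⟩

include hnn hint hD

lemma SS_nonempty (u : ℝ) (hu : u ∈ Ioo (0:ℝ) 1) :
    {c | u * (∫ x, p x) ≤ FF p c}.Nonempty := by
  have h : u * (∫ x, p x) < ∫ x, p x := by nlinarith [hu.1, hu.2]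
  obtain ⟨c, hc⟩ := ((FF_tendsto_atTop hnn hint).eventually_const_lt h).exists
  exact ⟨c, hc.le⟩

lemma SS_bddBelow (u : ℝ) (hu : u ∈ Ioo (0:ℝ) 1) :
    BddBelow {c | u * (∫ x, p x) ≤ FF p c} := by
  have h : (0:ℝ) < u * (∫ x, p x) := mul_pos hu.1 hD
  obtain ⟨c₀, hc₀⟩ := ((FF_tendsto_atBot hnn hint).eventually_lt_const h).exists
  refine ⟨c₀, fun c hc => ?_⟩
  by_contra hlt
  push_neg at hlt
  exact absurd (le_trans hc (FF_mono hnn hint hlt.le)) (not_le.2 hc₀)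

lemma QQ_spec (u : ℝ) (hu : u ∈ Ioo (0:ℝ) 1) :
    u * (∫ x, p x) ≤ FF p (QQ p u) := by
  rw [QQ_eq u hu]
  exact IsClosed.csInf_mem (isClosed_Ici.preimage (FF_cont hint))
    (SS_nonempty hnn hint hD u hu) (SS_bddBelow hnn hint hD u hu)

lemma QQ_le_iff (u : ℝ) (hu : u ∈ Ioo (0:ℝ) 1) (c : ℝ) :
    QQ p u ≤ c ↔ u * (∫ x, p x) ≤ FF p c := by
  constructor
  · intro h
    exact le_trans (QQ_spec hnn hint hD u hu) (FF_mono hnn hint h)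
  · intro h
    rw [QQ_eq u hu]
    exact csInf_le (SS_bddBelow hnn hint hD u hu) h

lemma QQ_measurable : Measurable (QQ p) := by
  apply measurable_of_Iic
  intro c
  have : QQ p ⁻¹' Iic c =
      (Ioo (0:ℝ) 1 ∩ {u | u * (∫ x, p x) ≤ FF p c}) ∪
      ((Ioo (0:ℝ) 1)ᶜ ∩ (if (0:ℝ) ≤ c then univ else ∅)) := by
    ext u
    by_cases hu : u ∈ Ioo (0:ℝ) 1
    · simp only [mem_preimage, mem_Iic, mem_union, mem_inter_iff, hu, true_and,
        mem_compl_iff, not_true, false_and, or_false]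
      exact QQ_le_iff hnn hint hD u hu c
    · have : QQ p u = 0 := by
        unfold QQ
        rw [if_neg]
        simpa [mem_Ioo] using hu
      simp only [mem_preimage, mem_Iic, this, mem_union, mem_inter_iff, hu, false_and,
        mem_compl_iff, not_false_iff, true_and, false_or]
      by_cases hc : (0:ℝ) ≤ c <;> simp [hc]
  rw [this]
  have hset : {u : ℝ | u * (∫ x, p x) ≤ FF p c} = Iic (FF p c / (∫ x, p x)) := by
    ext u
    rw [mem_setOf_eq, mem_Iic, le_div_iff₀ hD]
  refine MeasurableSet.union (measurableSet_Ioo.inter (by rw [hset]; exact measurableSet_Iic)) ?_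
  exact measurableSet_Ioo.compl.inter (by split <;> simp)

lemma QQ_monoOn : MonotoneOn (QQ p) (Ioo (0:ℝ) 1) := by
  intro a ha b hb hab
  rw [QQ_le_iff hnn hint hD a ha]
  calc a * (∫ x, p x) ≤ b * (∫ x, p x) := by nlinarith [hD]
    _ ≤ FF p (QQ p b) := QQ_spec hnn hint hD b hb

lemma map_QQ (hmeas : Measurable p) :
    (volume.restrict (Ioo (0:ℝ) 1)).map (QQ p) =
      (ENNReal.ofReal (∫ x, p x))⁻¹ • volume.withDensity (fun x => ENNReal.ofReal (p x)) := by
  set D := ∫ x, p x with hDd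
  haveI : IsFiniteMeasure ((volume.restrict (Ioo (0:ℝ) 1)).map (QQ p)) := by
    constructor
    rw [Measure.map_apply (QQ_measurable hnn hint hD) MeasurableSet.univ]
    calc (volume.restrict (Ioo (0:ℝ) 1)) (QQ p ⁻¹' univ)
        ≤ (volume.restrict (Ioo (0:ℝ) 1)) univ := measure_mono (subset_univ _)
      _ = volume (Ioo (0:ℝ) 1) := Measure.restrict_apply_univ _
      _ < ⊤ := measure_Ioo_lt_top
  apply MeasureTheory.Measure.ext_of_Iic
  intro c
  set r := FF p c / D with hrd
  have hr0 : 0 ≤ r := div_nonneg (FF_nonneg hnn c) hD.le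
  have hr1 : r ≤ 1 := by
    rw [hrd, div_le_one hD]
    exact FF_le hnn hint c
  have hLHS : ((volume.restrict (Ioo (0:ℝ) 1)).map (QQ p)) (Iic c) = ENNReal.ofReal r := by
    rw [Measure.map_apply (QQ_measurable hnn hint hD) measurableSet_Iic,
      Measure.restrict_apply (measurableSet_Iic.preimage (QQ_measurable hnn hint hD))]
    have hseteq : QQ p ⁻¹' Iic c ∩ Ioo (0:ℝ) 1 = Ioo (0:ℝ) 1 ∩ Iic r := by
      ext u
      simp only [mem_inter_iff, mem_preimage, mem_Iic, mem_Ioo]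
      constructor
      · rintro ⟨h1, h2⟩
        refine ⟨h2, ?_⟩
        rw [hrd, le_div_iff₀ hD]
        exact (QQ_le_iff hnn hint hD u h2 c).1 h1
      · rintro ⟨h2, h1⟩
        refine ⟨?_, h2⟩
        rw [QQ_le_iff hnn hint hD u h2 c, ← le_div_iff₀ hD]
        exact h1
    rw [hseteq]
    rcases hr1.lt_or_eq with hlt | heq
    · have : Ioo (0:ℝ) 1 ∩ Iic r = Ioc 0 r := by
        ext u
        simp only [mem_inter_iff, mem_Ioo, mem_Iic, mem_Ioc]
        constructor
        · rintro ⟨⟨h1, _⟩, h3⟩; exact ⟨h1, h3⟩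
        · rintro ⟨h1, h3⟩; exact ⟨⟨h1, lt_of_le_of_lt h3 hlt⟩, h3⟩
      rw [this, Real.volume_Ioc, sub_zero]
    · have : Ioo (0:ℝ) 1 ∩ Iic r = Ioo 0 1 := by
        rw [inter_eq_left]
        intro u hu
        rw [mem_Iic, heq]
        exact hu.2.le
      rw [this, Real.volume_Ioo, sub_zero, heq]
  rw [hLHS]
  rw [Measure.smul_apply, smul_eq_mul, withDensity_apply _ measurableSet_Iic]
  have : ∫⁻ x in Iic c, ENNReal.ofReal (p x) = ENNReal.ofReal (FF p c) :=
    (ofReal_integral_eq_lintegral_ofReal hint.restrict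
      (Eventually.of_forall hnn)).symm
  rw [this, hrd, ENNReal.ofReal_div_of_pos hD, ENNReal.div_eq_inv_mul]

lemma QQ_integral (hmeas : Measurable p) (φ : ℝ → ℝ) (hφ : Measurable φ) :
    ∫ u in Ioo (0:ℝ) 1, φ (QQ p u) = (∫ x, φ x * p x) / (∫ x, p x) := by
  have h1 : ∫ u in Ioo (0:ℝ) 1, φ (QQ p u)
      = ∫ y, φ y ∂((volume.restrict (Ioo (0:ℝ) 1)).map (QQ p)) :=
    (integral_map (QQ_measurable hnn hint hD).aemeasurable hφ.aestronglyMeasurable).symm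
  rw [h1, map_QQ hnn hint hD hmeas, integral_smul_measure]
  have h2 : volume.withDensity (fun x => ENNReal.ofReal (p x))
      = volume.withDensity (fun x => ((p x).toNNReal : ℝ≥0∞)) := rfl
  rw [h2, integral_withDensity_eq_integral_smul (f := fun x => (p x).toNNReal)
    hmeas.real_toNNReal φ]
  have h3 : ∀ x, (p x).toNNReal • φ x = φ x * p x := by
    intro x
    rw [NNReal.smul_def, Real.coe_toNNReal _ (hnn x), smul_eq_mul, mul_comm]
  rw [show (fun x => (p x).toNNReal • φ x) = fun x => φ x * p x from funext h3]
  rw [ENNReal.toReal_inv, ENNReal.toReal_ofReal hD.le, smul_eq_mul, div_eq_inv_mul]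

end CDF

end Efron

open Efron


/-- Efron's monotonicity theorem for `m = 2`: if `X, Y` are independent with
log-concave densities and `Φ : ℝ² → ℝ` is bounded, measurable, and nondecreasing
in each coordinate, then `g(z) = E[Φ(X,Y) | X+Y = z]` (defined as a ratio of
integrals wherever the denominator is positive) is nondecreasing in `z`. -/
theorem stmt_16 (fX fY : ℝ → ℝ) (Φ : ℝ → ℝ → ℝ)
    (hfX_nn : ∀ x, 0 ≤ fX x) (hfY_nn : ∀ x, 0 ≤ fY x)
    (hfX_meas : Measurable fX) (hfY_meas : Measurable fY)
    (hfX_int : ∫ x, fX x = 1) (hfY_int : ∫ x, fY x = 1)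
    (hfX_lc : ∀ x y t : ℝ, t ∈ Set.Icc (0:ℝ) 1 →
        fX (t * x + (1 - t) * y) ≥ fX x ^ t * fX y ^ (1 - t))
    (hfY_lc : ∀ x y t : ℝ, t ∈ Set.Icc (0:ℝ) 1 →
        fY (t * x + (1 - t) * y) ≥ fY x ^ t * fY y ^ (1 - t))
    (hΦ_meas : Measurable (Function.uncurry Φ))
    (hΦ_bdd : ∃ M, ∀ x y, |Φ x y| ≤ M)
    (hΦ_mono₁ : ∀ y, Monotone fun x => Φ x y)
    (hΦ_mono₂ : ∀ x, Monotone (Φ x)) :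
    ∀ z₁ z₂ : ℝ, z₁ ≤ z₂ →
      0 < (∫ x, fX x * fY (z₁ - x)) → 0 < (∫ x, fX x * fY (z₂ - x)) →
      (∫ x, Φ x (z₁ - x) * (fX x * fY (z₁ - x))) / (∫ x, fX x * fY (z₁ - x)) ≤
        (∫ x, Φ x (z₂ - x) * (fX x * fY (z₂ - x))) / (∫ x, fX x * fY (z₂ - x)) := by
  intro z₁ z₂ hz h₁ h₂
  set Δ := z₂ - z₁ with hΔdef
  have hΔ : 0 ≤ Δ := by rw [hΔdef]; linarith
  set p₁ : ℝ → ℝ := fun x => fX x * fY (z₁ - x) with hp₁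
  set p₂ : ℝ → ℝ := fun x => fX x * fY (z₂ - x) with hp₂
  have hp₁_nn : ∀ x, 0 ≤ p₁ x := fun x => mul_nonneg (hfX_nn x) (hfY_nn _)
  have hp₂_nn : ∀ x, 0 ≤ p₂ x := fun x => mul_nonneg (hfX_nn x) (hfY_nn _)
  have hp₁_meas : Measurable p₁ :=
    hfX_meas.mul (hfY_meas.comp (measurable_const.sub measurable_id))
  have hp₂_meas : Measurable p₂ :=
    hfX_meas.mul (hfY_meas.comp (measurable_const.sub measurable_id))
  have hint₁ : Integrable p₁ := by
    by_contra h; rw [integral_undef h] at h₁; exact lt_irrefl _ h₁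
  have hint₂ : Integrable p₂ := by
    by_contra h; rw [integral_undef h] at h₂; exact lt_irrefl _ h₂
  -- TP₂ property from log-concavity of fY
  have hTP : ∀ ⦃y x : ℝ⦄, y ≤ x → p₁ x * p₂ y ≤ p₂ x * p₁ y := by
    intro y x hyx
    have h := lc_prod hfY_nn hfY_lc (z₁ - x) (sub_nonneg.2 hyx) hΔ
    have e1 : z₁ - x + Δ = z₂ - x := by rw [hΔdef]; ring
    have e2 : z₁ - x + (x - y) = z₁ - y := by ring
    have e3 : z₁ - x + (x - y) + Δ = z₂ - y := by rw [hΔdef]; ring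
    rw [e3, e2, e1] at h
    calc p₁ x * p₂ y = (fX x * fX y) * (fY (z₁ - x) * fY (z₂ - y)) := by
          simp only [hp₁, hp₂]; ring
      _ ≤ (fX x * fX y) * (fY (z₂ - x) * fY (z₁ - y)) :=
          mul_le_mul_of_nonneg_left h (mul_nonneg (hfX_nn x) (hfX_nn y))
      _ = p₂ x * p₁ y := by simp only [hp₁, hp₂]; ring
  -- X-side stochastic dominance
  have dom₁ : ∀ c, FF p₂ c * (∫ x, p₁ x) ≤ FF p₁ c * (∫ x, p₂ x) := by
    intro c
    have hk := key_ineq hp₁_nn hp₂_nn hint₁ hint₂ hTP c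
    have e₁ := FF_add_compl hint₁ c
    have e₂ := FF_add_compl hint₂ c
    have hF₁ := FF_nonneg hp₁_nn c
    have hF₂ := FF_nonneg hp₂_nn c
    simp only [FF] at e₁ e₂ hF₁ hF₂ ⊢
    nlinarith [hk]
  -- the shifted density
  set q : ℝ → ℝ := fun x => p₂ (x + Δ) with hq
  have hq_nn : ∀ x, 0 ≤ q x := fun x => hp₂_nn _
  have hq_int : Integrable q := hint₂.comp_add_right Δ
  have hq_total : (∫ x, q x) = ∫ x, p₂ x := integral_add_right_eq_self p₂ Δ
  have hshift : ∀ c, (∫ x in Iic c, q x) = ∫ x in Iic (c + Δ), p₂ x := by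
    intro c
    rw [← integral_indicator measurableSet_Iic, ← integral_indicator measurableSet_Iic]
    have hind : (Iic c).indicator q = fun x => (Iic (c + Δ)).indicator p₂ (x + Δ) := by
      ext x
      by_cases hx : x ≤ c
      · rw [indicator_of_mem (mem_Iic.2 hx),
          indicator_of_mem (mem_Iic.2 (by linarith : x + Δ ≤ c + Δ))]
      · rw [indicator_of_notMem (fun h => hx (mem_Iic.1 h)),
          indicator_of_notMem (fun h => hx (by linarith [mem_Iic.1 h]))]
    rw [hind, integral_add_right_eq_self]
  -- TP₂ property from log-concavity of fX, for the pair (q, p₁)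
  have hTP' : ∀ ⦃y x : ℝ⦄, y ≤ x → q x * p₁ y ≤ p₁ x * q y := by
    intro y x hyx
    have h := lc_prod hfX_nn hfX_lc y hΔ (sub_nonneg.2 hyx)
    have e1 : y + (x - y) = x := by ring
    have e2 : y + Δ + (x - y) = x + Δ := by ring
    rw [e2, e1] at h
    have e3 : ∀ w : ℝ, z₂ - (w + Δ) = z₁ - w := fun w => by rw [hΔdef]; ring
    calc q x * p₁ y = (fY (z₁ - x) * fY (z₁ - y)) * (fX y * fX (x + Δ)) := by
          simp only [hq, hp₂, hp₁]; rw [e3 x]; ring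
      _ ≤ (fY (z₁ - x) * fY (z₁ - y)) * (fX x * fX (y + Δ)) :=
          mul_le_mul_of_nonneg_left h (mul_nonneg (hfY_nn _) (hfY_nn _))
      _ = p₁ x * q y := by simp only [hq, hp₂, hp₁]; rw [e3 y]; ring
  -- Y-side stochastic dominance
  have dom₂ : ∀ c, FF p₁ c * (∫ x, p₂ x) ≤ FF p₂ (c + Δ) * (∫ x, p₁ x) := by
    intro c
    have hk := key_ineq hq_nn hp₁_nn hq_int hint₁ hTP' c
    have e₁ := FF_add_compl hint₁ c
    have eq := FF_add_compl hq_int c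
    have hF₁ := FF_nonneg hp₁_nn c
    have hFq := FF_nonneg hq_nn c
    simp only [FF] at e₁ eq hF₁ hFq ⊢
    rw [← hshift c, ← hq_total]
    nlinarith [hk]
  -- quantile comparisons
  have hQle : ∀ u ∈ Ioo (0:ℝ) 1, QQ p₁ u ≤ QQ p₂ u := by
    intro u hu
    rw [QQ_le_iff hp₁_nn hint₁ h₁ u hu]
    have hs := QQ_spec hp₂_nn hint₂ h₂ u hu
    have hd := dom₁ (QQ p₂ u)
    have hu0 : 0 ≤ u := hu.1.le
    nlinarith [h₁, h₂, hs, hd]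
  have hQshift : ∀ u ∈ Ioo (0:ℝ) 1, QQ p₂ u ≤ QQ p₁ u + Δ := by
    intro u hu
    rw [QQ_le_iff hp₂_nn hint₂ h₂ u hu]
    have hs := QQ_spec hp₁_nn hint₁ h₁ u hu
    have hd := dom₂ (QQ p₁ u)
    have hu0 : 0 ≤ u := hu.1.le
    nlinarith [h₁, h₂, hs, hd]
  -- measurability of the composed integrands
  have hφ₁ : Measurable (fun x => Φ x (z₁ - x)) :=
    hΦ_meas.comp (measurable_id.prodMk (measurable_const.sub measurable_id))
  have hφ₂ : Measurable (fun x => Φ x (z₂ - x)) :=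
    hΦ_meas.comp (measurable_id.prodMk (measurable_const.sub measurable_id))
  have hQI₁ := QQ_integral hp₁_nn hint₁ h₁ hp₁_meas (fun x => Φ x (z₁ - x)) hφ₁
  have hQI₂ := QQ_integral hp₂_nn hint₂ h₂ hp₂_meas (fun x => Φ x (z₂ - x)) hφ₂
  obtain ⟨M, hM⟩ := hΦ_bdd
  haveI : IsFiniteMeasure (volume.restrict (Ioo (0:ℝ) 1)) :=
    ⟨by rw [Measure.restrict_apply_univ]; exact measure_Ioo_lt_top⟩
  have hmQ₁ : Measurable fun u => Φ (QQ p₁ u) (z₁ - QQ p₁ u) :=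
    hΦ_meas.comp ((QQ_measurable hp₁_nn hint₁ h₁).prodMk
      (measurable_const.sub (QQ_measurable hp₁_nn hint₁ h₁)))
  have hmQ₂ : Measurable fun u => Φ (QQ p₂ u) (z₂ - QQ p₂ u) :=
    hΦ_meas.comp ((QQ_measurable hp₂_nn hint₂ h₂).prodMk
      (measurable_const.sub (QQ_measurable hp₂_nn hint₂ h₂)))
  have hiQ₁ : IntegrableOn (fun u => Φ (QQ p₁ u) (z₁ - QQ p₁ u)) (Ioo (0:ℝ) 1) := by
    refine Integrable.mono' (integrable_const M) hmQ₁.aestronglyMeasurable ?_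
    exact Eventually.of_forall fun u => by rw [Real.norm_eq_abs]; exact hM _ _
  have hiQ₂ : IntegrableOn (fun u => Φ (QQ p₂ u) (z₂ - QQ p₂ u)) (Ioo (0:ℝ) 1) := by
    refine Integrable.mono' (integrable_const M) hmQ₂.aestronglyMeasurable ?_
    exact Eventually.of_forall fun u => by rw [Real.norm_eq_abs]; exact hM _ _
  show (∫ x, Φ x (z₁ - x) * p₁ x) / (∫ x, p₁ x) ≤ (∫ x, Φ x (z₂ - x) * p₂ x) / (∫ x, p₂ x)
  calc (∫ x, Φ x (z₁ - x) * p₁ x) / (∫ x, p₁ x)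
      = ∫ u in Ioo (0:ℝ) 1, Φ (QQ p₁ u) (z₁ - QQ p₁ u) := hQI₁.symm
    _ ≤ ∫ u in Ioo (0:ℝ) 1, Φ (QQ p₂ u) (z₂ - QQ p₂ u) := by
        refine setIntegral_mono_on hiQ₁ hiQ₂ measurableSet_Ioo ?_
        intro u hu
        calc Φ (QQ p₁ u) (z₁ - QQ p₁ u) ≤ Φ (QQ p₂ u) (z₁ - QQ p₁ u) :=
              hΦ_mono₁ _ (hQle u hu)
          _ ≤ Φ (QQ p₂ u) (z₂ - QQ p₂ u) := hΦ_mono₂ _ (by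
              have := hQshift u hu
              rw [hΔdef] at this
              linarith)
    _ = (∫ x, Φ x (z₂ - x) * p₂ x) / (∫ x, p₂ x) := hQI₂
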